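/- Let R = 𝔽₂[x, y, z]/I where I = (x² + 1, y², z² + x, xy + y, xz + y + z, yz + x + 1). Then the ideal J generated by the images of x + 1, y, z + 1 is a maximal ideal of R satisfying J⁴ = 0 and J³ ≠ 0. -/

import Mathlib

open MvPolynomial

noncomputable abbrev stmt18X : MvPolynomial (Fin 3) (ZMod 2) := X 0
noncomputable abbrev stmt18Y : MvPolynomial (Fin 3) (ZMod 2) := X 1
noncomputable abbrev stmt18Z : MvPolynomial (Fin 3) (ZMod 2) := X 2

/-- The ideal `I = (x² + 1, y², z² + x, xy + y, xz + y + z, yz + x + 1)`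
of `𝔽₂[x, y, z]`. -/
noncomputable abbrev stmt18I : Ideal (MvPolynomial (Fin 3) (ZMod 2)) :=
  Ideal.span {stmt18X ^ 2 + 1, stmt18Y ^ 2, stmt18Z ^ 2 + stmt18X,
    stmt18X * stmt18Y + stmt18Y, stmt18X * stmt18Z + stmt18Y + stmt18Z,
    stmt18Y * stmt18Z + stmt18X + 1}

/-- The ideal `J` of `R = 𝔽₂[x, y, z]/I` generated by the images of
`x + 1`, `y`, `z + 1`. -/
noncomputable abbrev stmt18J : Ideal (MvPolynomial (Fin 3) (ZMod 2) ⧸ stmt18I) :=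
  Ideal.span {Ideal.Quotient.mk stmt18I (stmt18X + 1),
    Ideal.Quotient.mk stmt18I stmt18Y,
    Ideal.Quotient.mk stmt18I (stmt18Z + 1)}

namespace Stmt18Aux

abbrev P : Type := MvPolynomial (Fin 3) (ZMod 2)

lemma twoP : (2 : P) = 0 := CharTwo.two_eq_zero

lemma g1_mem : stmt18X ^ 2 + 1 ∈ stmt18I := Ideal.subset_span (by simp)
lemma g3_mem : stmt18Z ^ 2 + stmt18X ∈ stmt18I := Ideal.subset_span (by simp)
lemma g5_mem : stmt18X * stmt18Z + stmt18Y + stmt18Z ∈ stmt18I := Ideal.subset_span (by simp)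

noncomputable abbrev u : MvPolynomial (Fin 3) (ZMod 2) ⧸ stmt18I :=
  Ideal.Quotient.mk stmt18I (stmt18Z + 1)

lemma e1 : Ideal.Quotient.mk stmt18I (stmt18X + 1) = u ^ 2 := by
  rw [← map_pow, Ideal.Quotient.eq]
  have h : (stmt18X + 1) - (stmt18Z + 1) ^ 2
      = (stmt18Z ^ 2 + stmt18X) + (2 : P) * (-(stmt18Z ^ 2 + stmt18Z)) := by ring
  rw [h, twoP, zero_mul, add_zero]
  exact g3_mem

lemma e2 : Ideal.Quotient.mk stmt18I stmt18Y = u ^ 2 * Ideal.Quotient.mk stmt18I stmt18Z := by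
  rw [← map_pow, ← map_mul, Ideal.Quotient.eq]
  have h : stmt18Y - (stmt18Z + 1) ^ 2 * stmt18Z
      = ((stmt18X * stmt18Z + stmt18Y + stmt18Z) - stmt18Z * (stmt18Z ^ 2 + stmt18X))
        + (2 : P) * (-(stmt18Z ^ 2 + stmt18Z)) := by ring
  rw [h, twoP, zero_mul, add_zero]
  exact Ideal.sub_mem _ g5_mem (Ideal.mul_mem_left _ _ g3_mem)

lemma e3 : u ^ 4 = 0 := by
  rw [← map_pow, Ideal.Quotient.eq_zero_iff_mem]
  have h : (stmt18Z + 1) ^ 4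
      = ((stmt18Z ^ 2 + stmt18X) * (stmt18Z ^ 2 + stmt18X) - (stmt18X ^ 2 + 1))
        + (2 : P) * (2 * stmt18Z ^ 3 + 3 * stmt18Z ^ 2 + 2 * stmt18Z + 1
            - stmt18X * stmt18Z ^ 2) := by ring
  rw [h, twoP, zero_mul, add_zero]
  exact Ideal.sub_mem _ (Ideal.mul_mem_left _ _ g3_mem) g1_mem

lemma hJ : stmt18J = Ideal.span {u} := by
  apply le_antisymm
  · rw [Ideal.span_le]
    rintro p hp
    simp only [Set.mem_insert_iff, Set.mem_singleton_iff] at hp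
    rcases hp with rfl | rfl | rfl
    · rw [e1]; exact Ideal.mem_span_singleton.2 (dvd_pow_self u two_ne_zero)
    · rw [e2]
      exact Ideal.mul_mem_right _ _ (Ideal.mem_span_singleton.2 (dvd_pow_self u two_ne_zero))
    · exact Ideal.subset_span rfl
  · rw [Ideal.span_le]
    rintro p rfl
    exact Ideal.subset_span (by simp)

-- the target ring 𝔽₂[T]/(T⁴)
noncomputable abbrev SI : Ideal (Polynomial (ZMod 2)) :=
  Ideal.span {(Polynomial.X : Polynomial (ZMod 2)) ^ 4}

abbrev S : Type := Polynomial (ZMod 2) ⧸ SI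

noncomputable abbrev mkS : Polynomial (ZMod 2) →+* S := Ideal.Quotient.mk SI

noncomputable abbrev t : S := mkS Polynomial.X

noncomputable abbrev v : Fin 3 → S := ![t ^ 2 + 1, t ^ 3 + t ^ 2, t + 1]

noncomputable abbrev φ : P →ₐ[ZMod 2] S := aeval v

lemma t4 : t ^ 4 = 0 := by
  rw [← map_pow, Ideal.Quotient.eq_zero_iff_mem]
  exact Ideal.subset_span rfl

lemma twoQ : (2 : Polynomial (ZMod 2)) = 0 := CharTwo.two_eq_zero

lemma twoS : (2 : S) = 0 := by
  have := congrArg mkS twoQ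
  exact (map_ofNat mkS 2).symm.trans this

lemma hker : stmt18I ≤ RingHom.ker φ := by
  rw [Ideal.span_le]
  rintro p hp
  simp only [Set.mem_insert_iff, Set.mem_singleton_iff] at hp
  have v0 : v 0 = t ^ 2 + 1 := rfl
  have v1 : v 1 = t ^ 3 + t ^ 2 := rfl
  have v2 : v 2 = t + 1 := rfl
  rcases hp with rfl | rfl | rfl | rfl | rfl | rfl <;>
    simp only [SetLike.mem_coe, RingHom.mem_ker, AlgHom.toRingHom_eq_coe,
      RingHom.coe_coe, map_add, map_mul, map_pow, map_one, aeval_X, v0, v1, v2]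
  · linear_combination t4 + (t ^ 2 + 1) * twoS
  · linear_combination (t ^ 2 + 2 * t + 1) * t4
  · linear_combination (t ^ 2 + t + 1) * twoS
  · linear_combination (t + 1) * t4 + (t ^ 3 + t ^ 2) * twoS
  · linear_combination (t ^ 3 + t ^ 2 + t + 1) * twoS
  · linear_combination t4 + (t ^ 3 + t ^ 2 + 1) * twoS

lemma cube_not_mem : (stmt18Z + 1) ^ 3 ∉ stmt18I := by
  intro hmem
  have h0 : φ ((stmt18Z + 1) ^ 3) = 0 := hker hmem
  have h1 : φ ((stmt18Z + 1) ^ 3) = (t + 1 + 1) ^ 3 := by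
    simp only [map_add, map_pow, map_one, aeval_X]
    rfl
  have h2 : (t + 1 + 1 : S) ^ 3 = t ^ 3 := by
    linear_combination (3 * t ^ 2 + 6 * t + 4) * twoS
  rw [h1, h2] at h0
  rw [show t ^ 3 = mkS (Polynomial.X ^ 3) by rw [map_pow]] at h0
  rw [Ideal.Quotient.eq_zero_iff_mem, Ideal.mem_span_singleton] at h0
  have h3 := Polynomial.natDegree_le_of_dvd h0 (pow_ne_zero 3 Polynomial.X_ne_zero)
  simp [Polynomial.natDegree_X_pow] at h3

-- Maximality
noncomputable abbrev Jp : Ideal P := Ideal.span {stmt18X + 1, stmt18Y, stmt18Z + 1}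

noncomputable abbrev a : Fin 3 → ZMod 2 := ![1, 0, 1]

lemma X_sub_mem : ∀ i : Fin 3, X i - C (a i) ∈ Jp := by
  intro i
  fin_cases i
  · show X 0 - C (a 0) ∈ Jp
    have h : (X 0 : P) - C (a 0) = (stmt18X + 1) + (2 : P) * (-1) := by
      simp only [a, Matrix.cons_val_zero, map_one]
      ring
    rw [h, twoP, zero_mul, add_zero]
    exact Ideal.subset_span (by simp)
  · show X 1 - C (a 1) ∈ Jp
    have h : (X 1 : P) - C (a 1) = stmt18Y := by simp [a]
    rw [h]
    exact Ideal.subset_span (by simp)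
  · show X 2 - C (a 2) ∈ Jp
    have h : (X 2 : P) - C (a 2) = (stmt18Z + 1) + (2 : P) * (-1) := by
      simp only [a, Matrix.cons_val_two, Matrix.tail_cons, Matrix.head_cons, map_one]
      ring
    rw [h, twoP, zero_mul, add_zero]
    exact Ideal.subset_span (by simp)

lemma key_sub (p : P) : p - C (eval a p) ∈ Jp := by
  induction p using MvPolynomial.induction_on with
  | C r => simp
  | add p q hp hq =>
      rw [eval_add, C_add]
      have h := Ideal.add_mem _ hp hq
      convert h using 1
      ring
  | mul_X p i hp =>
      rw [eval_mul, eval_X, C_mul]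
      have h := Ideal.add_mem _ (Ideal.mul_mem_right (C (a i)) _ hp)
        (Ideal.mul_mem_left _ p (X_sub_mem i))
      convert h using 1
      ring

lemma Jp_eq_ker : Jp = RingHom.ker (eval a : P →+* ZMod 2) := by
  apply le_antisymm
  · rw [Ideal.span_le]
    rintro p hp
    simp only [Set.mem_insert_iff, Set.mem_singleton_iff] at hp
    rcases hp with rfl | rfl | rfl <;>
      · simp only [SetLike.mem_coe, RingHom.mem_ker, map_add, map_one, eval_X]
        decide
  · intro p hp
    rw [RingHom.mem_ker] at hp
    have := key_sub p
    rwa [hp, map_zero, sub_zero] at this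

lemma Jp_max : Jp.IsMaximal := by
  rw [Jp_eq_ker]
  exact RingHom.ker_isMaximal_of_surjective _ (fun r => ⟨C r, eval_C _⟩)

lemma I_le_Jp : stmt18I ≤ Jp := by
  rw [Jp_eq_ker, Ideal.span_le]
  rintro p hp
  simp only [Set.mem_insert_iff, Set.mem_singleton_iff] at hp
  rcases hp with rfl | rfl | rfl | rfl | rfl | rfl <;>
    · simp only [SetLike.mem_coe, RingHom.mem_ker, map_add, map_mul, map_pow, map_one, eval_X]
      decide

lemma hmap : stmt18J = Ideal.map (Ideal.Quotient.mk stmt18I) Jp := by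
  rw [Ideal.map_span, Set.image_insert_eq, Set.image_insert_eq, Set.image_singleton]

lemma J_max : stmt18J.IsMaximal := by
  rw [hmap]
  rcases Ideal.map_eq_top_or_isMaximal_of_surjective (Ideal.Quotient.mk stmt18I)
      Ideal.Quotient.mk_surjective Jp_max with h | h
  · exfalso
    have h2 : Ideal.comap (Ideal.Quotient.mk stmt18I) (Ideal.map (Ideal.Quotient.mk stmt18I) Jp)
        = Jp := by
      rw [Ideal.comap_map_of_surjective _ Ideal.Quotient.mk_surjective,
        ← RingHom.ker_eq_comap_bot, Ideal.mk_ker, sup_eq_left.2 I_le_Jp]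
    rw [h, Ideal.comap_top] at h2
    exact Jp_max.ne_top h2.symm
  · exact h

end Stmt18Aux

/-- With `R = 𝔽₂[x,y,z]/(x²+1, y², z²+x, xy+y, xz+y+z, yz+x+1)`, the ideal
`J = (x̄+1, ȳ, z̄+1)` of `R` is maximal and satisfies `J⁴ = 0` and `J³ ≠ 0`. -/
theorem stmt_18 : stmt18J.IsMaximal ∧ stmt18J ^ 4 = ⊥ ∧ stmt18J ^ 3 ≠ ⊥ := by
  refine ⟨Stmt18Aux.J_max, ?_, ?_⟩
  · rw [Stmt18Aux.hJ, Ideal.span_singleton_pow, Stmt18Aux.e3]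
    exact Ideal.span_singleton_eq_bot.2 rfl
  · rw [Stmt18Aux.hJ, Ideal.span_singleton_pow, Ne, Ideal.span_singleton_eq_bot]
    intro h
    rw [← map_pow, Ideal.Quotient.eq_zero_iff_mem] at h
    exact Stmt18Aux.cube_not_mem h
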